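/- For a convex function g : R^d → R with maximizer z̄ of g over the closed unit ball satisfying ‖z̄‖ = 1, if z ∈ R^d satisfies ⟨z̄, z⟩ ≥ 1, then g(z) ≥ g(z̄). -/

import Mathlib

open scoped RealInnerProductSpace

theorem aux_strict
    {d : ℕ} (g : EuclideanSpace ℝ (Fin d) → ℝ)
    (hg : ConvexOn ℝ Set.univ g)
    (zbar : EuclideanSpace ℝ (Fin d)) (hzbar : ‖zbar‖ = 1)
    (hmax : ∀ w : EuclideanSpace ℝ (Fin d), ‖w‖ ≤ 1 → g w ≤ g zbar)
    (z : EuclideanSpace ℝ (Fin d)) (hz : 1 < ⟪zbar, z⟫) :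
    g zbar ≤ g z := by
  have hne : z ≠ zbar := by
    intro h
    rw [h, real_inner_self_eq_norm_sq, hzbar] at hz
    norm_num at hz
  have hcpos : 0 < ‖z - zbar‖ ^ 2 :=
    pow_pos (norm_pos_iff.mpr (sub_ne_zero.mpr hne)) 2
  set c : ℝ := ‖z - zbar‖ ^ 2 with hc
  set t : ℝ := (⟪zbar, z⟫ - 1) / c with ht
  have htpos : 0 < t := div_pos (by linarith) hcpos
  set u : EuclideanSpace ℝ (Fin d) := zbar - t • (z - zbar) with hu
  have hnorm : ‖u‖ ≤ 1 := by
    have h1 : ‖u‖ ^ 2 = 1 - 2 * t * (⟪zbar, z⟫ - 1) + t ^ 2 * c := by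
      rw [hu, norm_sub_sq_real, norm_smul, real_inner_smul_right, hzbar,
        inner_sub_right, real_inner_self_eq_norm_sq, hzbar,
        Real.norm_eq_abs, mul_pow, sq_abs, hc]
      ring
    have h2 : t ^ 2 * c = t * (⟪zbar, z⟫ - 1) := by
      rw [ht]; field_simp
    have h3 : ‖u‖ ^ 2 ≤ 1 := by rw [h1, h2]; nlinarith
    nlinarith [norm_nonneg u]
  have hgu : g u ≤ g zbar := hmax u hnorm
  have h1t : (0 : ℝ) < 1 + t := by linarith
  have hcomb : (1 / (1 + t)) • u + (t / (1 + t)) • z = zbar := by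
    rw [hu, smul_sub, smul_smul, smul_sub]
    ext i
    simp only [PiLp.add_apply, PiLp.sub_apply, PiLp.smul_apply, smul_eq_mul]
    field_simp
    ring
  have key := hg.2 (Set.mem_univ u) (Set.mem_univ z)
    (le_of_lt (by positivity : (0:ℝ) < 1 / (1 + t)))
    (le_of_lt (div_pos htpos h1t))
    (by field_simp)
  rw [hcomb, smul_eq_mul, smul_eq_mul] at key
  have hmono : (1 / (1 + t)) * g u ≤ (1 / (1 + t)) * g zbar :=
    mul_le_mul_of_nonneg_left hgu (by positivity)
  have hid : (1 / (1 + t)) * g zbar + (t / (1 + t)) * g zbar = g zbar := by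
    rw [← add_mul]
    field_simp
  have htt : (0:ℝ) < t / (1 + t) := div_pos htpos h1t
  have hfin : (t / (1 + t)) * g zbar ≤ (t / (1 + t)) * g z := by linarith
  exact le_of_mul_le_mul_left hfin htt

theorem convex_max_of_inner_ge_one
    {d : ℕ} (g : EuclideanSpace ℝ (Fin d) → ℝ)
    (hg : ConvexOn ℝ Set.univ g)
    (zbar : EuclideanSpace ℝ (Fin d)) (hzbar : ‖zbar‖ = 1)
    (hmax : ∀ w : EuclideanSpace ℝ (Fin d), ‖w‖ ≤ 1 → g w ≤ g zbar)
    (z : EuclideanSpace ℝ (Fin d)) (hz : 1 ≤ ⟪zbar, z⟫) :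
    g zbar ≤ g z := by
  rcases lt_or_eq_of_le hz with h | h
  · exact aux_strict g hg zbar hzbar hmax z h
  · have hcont : Continuous g := by
      rw [← continuousOn_univ]
      exact hg.continuousOn isOpen_univ
    have htd : Filter.Tendsto (fun ε : ℝ => z + ε • zbar) (nhds 0) (nhds z) := by
      have h0 : Filter.Tendsto (fun ε : ℝ => z + ε • zbar) (nhds 0)
          (nhds (z + (0:ℝ) • zbar)) :=
        ((continuous_const.add (continuous_id.smul continuous_const)).tendsto 0)
      simpa using h0
    have hlim : Filter.Tendsto (fun ε : ℝ => g (z + ε • zbar))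
        (nhdsWithin 0 (Set.Ioi 0)) (nhds (g z)) :=
      (hcont.tendsto z).comp (htd.mono_left nhdsWithin_le_nhds)
    refine ge_of_tendsto hlim ?_
    filter_upwards [self_mem_nhdsWithin] with ε hε
    apply aux_strict g hg zbar hzbar hmax
    rw [inner_add_right, real_inner_smul_right, real_inner_self_eq_norm_sq, hzbar, ← h]
    simp only [one_pow, mul_one]
    linarith [Set.mem_Ioi.mp hε]
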